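/- Let f_1,…,f_r be a covering sequence of R (generating the unit ideal) and x ∈ R, M an R-module. Then M is of bounded x-torsion if and only if M_{f_i} is of bounded (x/1)-torsion over R_{f_i} for all i = 1,…,r. -/

import Mathlib

/-- In a localized module, `(a/1) • (m/s) = 0` iff `a • m` is killed by some `u ∈ S`. -/
lemma smul_mk_eq_zero' {R : Type*} [CommRing R] (S : Submonoid R) {M : Type*} [AddCommGroup M]
    [Module R M] (a : R) (m : M) (s : S) :
    (algebraMap R (Localization S) a) • (LocalizedModule.mk m s) = 0 ↔
      ∃ u : S, a • (u : R) • m = 0 := by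
  rw [← Localization.mk_one_eq_algebraMap, LocalizedModule.mk_smul_mk, one_mul,
    ← LocalizedModule.zero_mk (1 : S), LocalizedModule.mk_eq]
  constructor <;> (rintro ⟨u, hu⟩; exact ⟨u, by simpa [smul_comm a, Submonoid.smul_def] using hu⟩)

/-- Membership of `m/s` in the `(x/1)^n`-torsion submodule of a localized module. -/
lemma mem_torsionBy_mk_iff {R : Type*} [CommRing R] (S : Submonoid R) {M : Type*} [AddCommGroup M]
    [Module R M] (x : R) (n : ℕ) (m : M) (s : S) :
    LocalizedModule.mk m s ∈
        Submodule.torsionBy (Localization S) (LocalizedModule S M)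
          ((algebraMap R (Localization S) x) ^ n) ↔
      ∃ u : S, (u : R) • m ∈ Submodule.torsionBy R M (x ^ n) := by
  rw [Submodule.mem_torsionBy_iff, ← map_pow, smul_mk_eq_zero']
  simp [Submodule.mem_torsionBy_iff]

/-- `M` is of bounded `x`-torsion. -/
def BoundedTorsion (R : Type*) [CommRing R] (M : Type*) [AddCommGroup M] [Module R M]
    (x : R) : Prop :=
  ∃ c : ℕ, ∀ n : ℕ, c ≤ n →
    Submodule.torsionBy R M (x ^ n) = Submodule.torsionBy R M (x ^ c)

/-- For a covering sequence `f_1,…,f_r` (generating the unit ideal), `M` is of bounded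
`x`-torsion iff each localization `M_{f_i}` is of bounded `x/1`-torsion over `R_{f_i}`. -/
theorem boundedTorsion_iff_localized_on_cover {R : Type*} [CommRing R] {r : ℕ}
    (f : Fin r → R) (hcov : Ideal.span (Set.range f) = ⊤)
    (M : Type*) [AddCommGroup M] [Module R M] (x : R) :
    BoundedTorsion R M x ↔
      ∀ i : Fin r,
        BoundedTorsion (Localization.Away (f i))
          (LocalizedModule (Submonoid.powers (f i)) M)
          (algebraMap R (Localization.Away (f i)) x) := by
  constructor
  · rintro ⟨c, hc⟩ i
    refine ⟨c, fun n hn => ?_⟩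
    ext z
    induction z using LocalizedModule.induction_on with
    | h m s =>
      rw [mem_torsionBy_mk_iff, mem_torsionBy_mk_iff, hc n hn]
  · intro h
    set c : Fin r → ℕ := fun i => (h i).choose with hc
    set C : ℕ := Finset.univ.sup c with hC
    refine ⟨C, fun n hn => le_antisymm (fun m hm => ?_) ?_⟩
    · -- locally `x^C` kills `m`, up to a power of `f i`
      rw [Submodule.mem_torsionBy_iff] at hm ⊢
      have key : ∀ i : Fin r, ∃ k : ℕ, f i ^ k • x ^ C • m = 0 := by
        intro i
        have h1 : LocalizedModule.mk m (1 : Submonoid.powers (f i)) ∈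
            Submodule.torsionBy (Localization.Away (f i))
              (LocalizedModule (Submonoid.powers (f i)) M)
              ((algebraMap R (Localization.Away (f i)) x) ^ n) := by
          rw [mem_torsionBy_mk_iff]
          exact ⟨1, by simpa [Submodule.mem_torsionBy_iff] using hm⟩
        rw [(h i).choose_spec n (le_trans (Finset.le_sup (f := c) (Finset.mem_univ i)) hn),
          mem_torsionBy_mk_iff] at h1
        obtain ⟨u, hu⟩ := h1
        obtain ⟨k, hk⟩ := u.2
        rw [Submodule.mem_torsionBy_iff] at hu
        have hci : c i ≤ C := Finset.le_sup (Finset.mem_univ i)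
        have hk' : f i ^ k = (u : R) := hk
        refine ⟨k, ?_⟩
        calc f i ^ k • x ^ C • m = x ^ (C - c i) • x ^ (c i) • (u : R) • m := by
              rw [hk', smul_smul, smul_smul, smul_smul]
              congr 1
              rw [← pow_add, Nat.sub_add_cancel hci, mul_comm]
          _ = 0 := by rw [hu, smul_zero]
      choose k hk using key
      set K : ℕ := Finset.univ.sup k with hK
      have hkey : ∀ i : Fin r, f i ^ K • x ^ C • m = 0 := by
        intro i
        have : K = (K - k i) + k i := (Nat.sub_add_cancel (Finset.le_sup (Finset.mem_univ i))).symm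
        rw [this, pow_add, mul_smul, hk i, smul_zero]
      have hspan : Ideal.span (Set.range fun i => f i ^ K) = ⊤ := by
        have := Ideal.span_pow_eq_top (Set.range f) hcov K
        rwa [← Set.range_comp] at this
      obtain ⟨a, ha⟩ := (Submodule.mem_span_range_iff_exists_fun _).mp
        ((Ideal.eq_top_iff_one _).mp hspan)
      calc x ^ C • m = (∑ i, a i • f i ^ K) • (x ^ C • m) := by rw [ha, one_smul]
        _ = ∑ i, (a i • f i ^ K) • (x ^ C • m) := Finset.sum_smul
        _ = 0 := Finset.sum_eq_zero fun i _ => by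
            rw [smul_eq_mul, mul_smul, hkey i, smul_zero]
    · exact Submodule.torsionBy_le_torsionBy_of_dvd _ _ (pow_dvd_pow x hn)
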